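/- Let R be a noetherian commutative ring of prime characteristic p and let a ⊆ R be an ideal such that R is purely F-regular along a in the lattice sense. Then: (1) for every maximal ideal m of R there exist an integer e ≥ 1 and an a-compatible p^e-linear map φ with φ(R) ⊄ m; (2) a is a radical ideal; and (3) any two distinct minimal primes q₁ ≠ q₂ of a are comaximal, i.e., q₁ + q₂ = R. -/

import Mathlib

/-- `φ` is a `p^e`-linear map: an additive map with `φ (a^(p^e) * b) = a * φ b`. -/
def IsPLinearMap (p e : ℕ) {R : Type*} [CommRing R] (φ : R →+ R) : Prop :=
  ∀ a b : R, φ (a ^ p ^ e * b) = a * φ b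

/-- An `a`-compatible `p^e`-linear map: a `p^e`-linear map `φ` with `φ a ⊆ a`. -/
def IsCompatiblePLinearMap (p : ℕ) {R : Type*} [CommRing R] (a : Ideal R) (e : ℕ)
    (φ : R →+ R) : Prop :=
  IsPLinearMap p e φ ∧ ∀ x ∈ a, φ x ∈ a

/-- `R` is purely F-regular along `a` in the lattice sense: every minimal prime of `a` is a
center of F-purity for the `a`-compatible maps, and every proper ideal compatible with all
`a`-compatible maps is contained in some minimal prime of `a`. -/
def PurelyFRegularLattice (p : ℕ) {R : Type*} [CommRing R] (a : Ideal R) : Prop :=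
  (∀ q ∈ a.minimalPrimes, ∃ e : ℕ, 1 ≤ e ∧ ∃ φ : R →+ R,
    IsCompatiblePLinearMap p a e φ ∧ ¬ (∀ x : R, φ x ∈ q)) ∧
  (∀ b : Ideal R, b ≠ ⊤ →
    (∀ (e : ℕ), 1 ≤ e → ∀ φ : R →+ R, IsCompatiblePLinearMap p a e φ →
      ∀ x ∈ b, φ x ∈ b) →
    ∃ q ∈ a.minimalPrimes, b ≤ q)

/-- For `q` a minimal prime over `a` and `x ∈ q`, some multiple `s * x ^ n` with `s ∉ q`
lies in `a`. -/
lemma exists_pow_mul_mem_of_minimal (p : ℕ) {R : Type*} [CommRing R] {a q : Ideal R}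
    (hq : q ∈ a.minimalPrimes) {x : R} (hx : x ∈ q) :
    ∃ n : ℕ, ∃ s, s ∉ q ∧ s * x ^ n ∈ a := by
  have hprime : q.IsPrime := hq.1.1
  have h1q : (1 : R) ∉ q := (Ideal.ne_top_iff_one q).mp hprime.ne_top
  by_contra hcon
  push_neg at hcon
  set M : Submonoid R :=
    { carrier := {r | ∃ s, s ∉ q ∧ ∃ n : ℕ, r = s * x ^ n}
      mul_mem' := by
        rintro r₁ r₂ ⟨s₁, hs₁, n₁, rfl⟩ ⟨s₂, hs₂, n₂, rfl⟩
        exact ⟨s₁ * s₂, fun hm => ((hprime.mem_or_mem hm).elim hs₁ hs₂), n₁ + n₂, by ring⟩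
      one_mem' := ⟨1, h1q, 0, by simp⟩ } with hM
  have hdisj : Disjoint (a : Set R) (M : Set R) := by
    rw [Set.disjoint_left]
    rintro r hr ⟨s, hs, n, rfl⟩
    exact hcon n s hs hr
  obtain ⟨p', hp', hap', hdisj'⟩ := Ideal.exists_le_prime_disjoint a M hdisj
  have hp'q : p' ≤ q := by
    intro t ht
    by_contra htq
    exact Set.disjoint_left.mp hdisj' ht ⟨t, htq, 0, by simp⟩
  have hqp' : q ≤ p' := hq.2 ⟨hp', hap'⟩ hp'q
  exact Set.disjoint_left.mp hdisj' (hqp' hx) ⟨1, h1q, 1, by simp⟩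

/-- Key saturation lemma: if `R` has an `a`-compatible map not mapping into the minimal
prime `q`, then for every `x ∈ q` there is `s ∉ q` with `s * x ∈ a`. -/
lemma exists_mul_mem_of_mem_minimalPrime (p : ℕ) (hp : p.Prime) {R : Type*} [CommRing R]
    {a q : Ideal R} (hq : q ∈ a.minimalPrimes)
    (hcenter : ∃ e : ℕ, 1 ≤ e ∧ ∃ φ : R →+ R,
      IsCompatiblePLinearMap p a e φ ∧ ¬ (∀ x : R, φ x ∈ q))
    {x : R} (hx : x ∈ q) : ∃ s, s ∉ q ∧ s * x ∈ a := by
  have hprime : q.IsPrime := hq.1.1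
  obtain ⟨e, he, φ, ⟨hlin, hcomp⟩, hnq⟩ := hcenter
  push_neg at hnq
  obtain ⟨u, hu⟩ := hnq
  obtain ⟨k, hk⟩ : ∃ k, p ^ e = k + 1 :=
    ⟨p ^ e - 1, (Nat.succ_pred_eq_of_pos (pow_pos hp.pos e)).symm⟩
  -- Step 2: descend one Frobenius power at a time
  have step2 : ∀ y : R, (∃ s, s ∉ q ∧ s * y ^ p ^ e ∈ a) → ∃ s, s ∉ q ∧ s * y ∈ a := by
    rintro y ⟨s, hs, hsy⟩
    have harg : s ^ p ^ e * (u * y ^ p ^ e) ∈ a := by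
      have : s ^ p ^ e * (u * y ^ p ^ e) = (s ^ k * u) * (s * y ^ p ^ e) := by
        rw [hk]; ring
      rw [this]
      exact Ideal.mul_mem_left a _ hsy
    have h1 : φ (s ^ p ^ e * (u * y ^ p ^ e)) = s * φ (u * y ^ p ^ e) := hlin s _
    have h2 : φ (u * y ^ p ^ e) = y * φ u := by
      rw [mul_comm u]; exact hlin y u
    have hmem : s * (y * φ u) ∈ a := by
      rw [← h2, ← h1]; exact hcomp _ harg
    refine ⟨s * φ u, fun hm => ((hprime.mem_or_mem hm).elim hs hu), ?_⟩
    have : s * φ u * y = s * (y * φ u) := by ring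
    rw [this]; exact hmem
  -- Step 3: iterate
  have step3 : ∀ m : ℕ, ∀ y : R, (∃ s, s ∉ q ∧ s * y ^ p ^ (e * m) ∈ a) →
      ∃ s, s ∉ q ∧ s * y ∈ a := by
    intro m
    induction m with
    | zero => intro y hy; simpa using hy
    | succ m ih =>
      intro y hy
      apply step2 y
      apply ih (y ^ p ^ e)
      obtain ⟨s, hs, hsy⟩ := hy
      refine ⟨s, hs, ?_⟩
      have : (y ^ p ^ e) ^ p ^ (e * m) = y ^ p ^ (e * (m + 1)) := by
        rw [← pow_mul, ← pow_add, Nat.mul_succ, Nat.add_comm]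
      rw [this]; exact hsy
  -- Step 1 + finish
  obtain ⟨n, s, hs, hsn⟩ := exists_pow_mul_mem_of_minimal p hq hx
  apply step3 n x
  have hle : n ≤ p ^ (e * n) := by
    calc n ≤ p ^ n := le_of_lt (Nat.lt_pow_self (n := n) hp.one_lt)
    _ ≤ p ^ (e * n) := Nat.pow_le_pow_right hp.pos (Nat.le_mul_of_pos_left n he)
  refine ⟨s, hs, ?_⟩
  have : s * x ^ p ^ (e * n) = x ^ (p ^ (e * n) - n) * (s * x ^ n) := by
    rw [mul_comm (x ^ (p ^ (e * n) - n)), mul_assoc, ← pow_add,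
      Nat.add_sub_cancel' hle]
  rw [this]
  exact Ideal.mul_mem_left a _ hsn

/-- Minimal primes of `a` are stable under all `a`-compatible maps (given F-purity at `q`). -/
lemma minimalPrime_stable (p : ℕ) (hp : p.Prime) {R : Type*} [CommRing R]
    {a q : Ideal R} (hq : q ∈ a.minimalPrimes)
    (hcenter : ∃ e : ℕ, 1 ≤ e ∧ ∃ φ : R →+ R,
      IsCompatiblePLinearMap p a e φ ∧ ¬ (∀ x : R, φ x ∈ q))
    {e : ℕ} {φ : R →+ R} (hφ : IsCompatiblePLinearMap p a e φ)
    {x : R} (hx : x ∈ q) : φ x ∈ q := by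
  have hprime : q.IsPrime := hq.1.1
  obtain ⟨s, hs, hsx⟩ := exists_mul_mem_of_mem_minimalPrime p hp hq hcenter hx
  obtain ⟨k, hk⟩ : ∃ k, p ^ e = k + 1 :=
    ⟨p ^ e - 1, (Nat.succ_pred_eq_of_pos (pow_pos hp.pos e)).symm⟩
  have harg : s ^ p ^ e * x ∈ a := by
    have : s ^ p ^ e * x = s ^ k * (s * x) := by rw [hk]; ring
    rw [this]; exact Ideal.mul_mem_left a _ hsx
  have : s * φ x ∈ a := by
    rw [← hφ.1 s x]; exact hφ.2 _ harg
  have hmem : s * φ x ∈ q := hq.1.2 this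
  exact (hprime.mem_or_mem hmem).resolve_left hs

/-- If `R` is purely F-regular along `a`, then `(R, 𝒞^[a])` is F-pure, `a` is radical, and the
minimal primes of `a` are pairwise comaximal. -/
theorem fPure_radical_comaximal_of_purelyFRegular (p : ℕ) (hp : p.Prime)
    (R : Type*) [CommRing R] [IsNoetherianRing R] [CharP R p]
    (a : Ideal R) (h : PurelyFRegularLattice p a) :
    (∀ m : Ideal R, m.IsMaximal → ∃ e : ℕ, 1 ≤ e ∧ ∃ φ : R →+ R,
      IsCompatiblePLinearMap p a e φ ∧ ¬ (∀ x : R, φ x ∈ m)) ∧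
    a.radical = a ∧
    (∀ q₁ ∈ a.minimalPrimes, ∀ q₂ ∈ a.minimalPrimes, q₁ ≠ q₂ → q₁ ⊔ q₂ = ⊤) := by
  obtain ⟨h1, h2⟩ := h
  refine ⟨?_, ?_, ?_⟩
  · -- F-purity at every maximal ideal
    intro m hm
    by_contra hcon
    push_neg at hcon
    have hstable : ∀ (e : ℕ), 1 ≤ e → ∀ φ : R →+ R, IsCompatiblePLinearMap p a e φ →
        ∀ x ∈ m, φ x ∈ m := by
      intro e he φ hφ x _
      exact hcon e he φ hφ x
    obtain ⟨q, hq, hmq⟩ := h2 m hm.ne_top hstable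
    have : m = q := (hm.eq_of_le hq.1.1.ne_top hmq).symm ▸ rfl
    obtain ⟨e, he, φ, hφ, hnq⟩ := h1 q hq
    apply hnq
    intro x
    have := hcon e he φ hφ x
    rwa [hm.eq_of_le hq.1.1.ne_top hmq] at this
  · -- a is radical
    refine le_antisymm ?_ Ideal.le_radical
    intro x hx
    set J : Ideal R := a.colon (Ideal.span {x}) with hJ
    have hJtop : J = ⊤ := by
      by_contra hJne
      have hstable : ∀ (e : ℕ), 1 ≤ e → ∀ φ : R →+ R, IsCompatiblePLinearMap p a e φ →
          ∀ r ∈ J, φ r ∈ J := by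
        intro e he φ hφ r hr
        rw [hJ, Ideal.mem_colon_span_singleton] at hr ⊢
        obtain ⟨k, hk⟩ : ∃ k, p ^ e = k + 1 :=
          ⟨p ^ e - 1, (Nat.succ_pred_eq_of_pos (pow_pos hp.pos e)).symm⟩
        have harg : x ^ p ^ e * r ∈ a := by
          have : x ^ p ^ e * r = x ^ k * (r * x) := by rw [hk]; ring
          rw [this]; exact Ideal.mul_mem_left a _ hr
        have : x * φ r ∈ a := by rw [← hφ.1 x r]; exact hφ.2 _ harg
        rwa [mul_comm] at this
      obtain ⟨q, hq, hJq⟩ := h2 J hJne hstable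
      have hxq : x ∈ q := by
        have : a.radical ≤ q := hq.1.1.radical_le_iff.mpr hq.1.2
        exact this hx
      obtain ⟨s, hs, hsx⟩ := exists_mul_mem_of_mem_minimalPrime p hp hq (h1 q hq) hxq
      have : s ∈ J := by rw [hJ, Ideal.mem_colon_span_singleton]; exact hsx
      exact hs (hJq this)
    have : (1 : R) ∈ J := hJtop ▸ Submodule.mem_top
    rw [hJ, Ideal.mem_colon_span_singleton, one_mul] at this
    exact this
  · -- comaximality
    intro q₁ hq₁ q₂ hq₂ hne
    by_contra hne'
    have hstable : ∀ (e : ℕ), 1 ≤ e → ∀ φ : R →+ R, IsCompatiblePLinearMap p a e φ →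
        ∀ r ∈ q₁ ⊔ q₂, φ r ∈ q₁ ⊔ q₂ := by
      intro e he φ hφ r hr
      obtain ⟨y, hy, z, hz, rfl⟩ := Submodule.mem_sup.mp hr
      rw [map_add]
      exact Submodule.add_mem_sup (minimalPrime_stable p hp hq₁ (h1 q₁ hq₁) hφ hy)
        (minimalPrime_stable p hp hq₂ (h1 q₂ hq₂) hφ hz)
    obtain ⟨q₃, hq₃, hle⟩ := h2 (q₁ ⊔ q₂) hne' hstable
    have h13 : q₁ = q₃ :=
      le_antisymm (le_sup_left.trans hle) (hq₃.2 ⟨hq₁.1.1, hq₁.1.2⟩ (le_sup_left.trans hle))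
    have h23 : q₂ = q₃ :=
      le_antisymm (le_sup_right.trans hle) (hq₃.2 ⟨hq₂.1.1, hq₂.1.2⟩ (le_sup_right.trans hle))
    exact hne (h13.trans h23.symm)
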